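/- Let K be an odd positive integer, ε ≥ 0, and m ≥ 0 a real number. Let h : {0,…,K} → [0,1] satisfy h(l) + h(K−l) = 1 for all l and h(l+1) ≥ h(l) for all 0 ≤ l ≤ K−1, define γ(l) = 1 − 2h(l) for l ≤ (K−1)/2 and γ(l) = 2h(l) − 1 for l ≥ (K+1)/2, and assume γ((K−1)/2) > 0 and γ((K+1)/2) > 0 and 0 ≤ γ(l) ≤ 1 for all l. Suppose that: (a) for all p' ∈ [0, 1/(1+e^ε)], e^{mε} · Σ_{x=0}^{K−1} C(K−1,x)(p')^x(1−p')^{K−1−x}·(h(x+1)−h(x)) ≥ e^{ε} · Σ_{x=0}^{K−1} C(K−1,x)(e^ε p')^x(1−e^ε p')^{K−1−x}·(h(x+1)−h(x)); and (b) for all p ∈ [1/(1+e^{−ε}), 1], e^{(m+1)ε} · Σ_{x=0}^{K−1} C(K−1,x)(1−e^ε(1−p))^x(e^ε(1−p))^{K−1−x}·(h(x+1)−h(x)) ≥ Σ_{x=0}^{K−1} C(K−1,x) p^x (1−p)^{K−1−x}·(h(x+1)−h(x)). Then for every (p,p') ∈ F(ε,0): Σ_{l=0}^{(K−1)/2} (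 e^{mε} b(l;K,p') − b(l;K,p) ) γ(l) + Σ_{l=(K+1)/2}^{K} ( b(l;K,p) − e^{mε} b(l;K,p') ) γ(l) ≤ e^{mε} − 1, i.e., DaRRM with noise function γ is mε-differentially private. -/

import Mathlib

open Finset

/-- Binomial(K,p) probability mass at `l`. -/
noncomputable def binomPMF (K : ℕ) (p : ℝ) (l : ℕ) : ℝ :=
  (K.choose l : ℝ) * p ^ l * (1 - p) ^ (K - l)

/-- The feasible region `F(ε,0)`: pairs `(p,p') ∈ [0,1]²` consistent with pure
`ε`-differential privacy. -/
def Feas0 (ε p p' : ℝ) : Prop :=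
  0 ≤ p ∧ p ≤ 1 ∧ 0 ≤ p' ∧ p' ≤ 1 ∧
  p ≤ Real.exp ε * p' ∧ p' ≤ Real.exp ε * p ∧
  1 - p ≤ Real.exp ε * (1 - p') ∧ 1 - p' ≤ Real.exp ε * (1 - p)

namespace St11

noncomputable def G (K : ℕ) (h : ℕ → ℝ) (p : ℝ) : ℝ :=
  ∑ l ∈ Finset.range (K+1), (K.choose l : ℝ) * p ^ l * (1 - p) ^ (K - l) * h l

noncomputable def D (K : ℕ) (h : ℕ → ℝ) (p : ℝ) : ℝ :=
  ∑ x ∈ Finset.range K, ((K-1).choose x : ℝ) * p ^ x * (1-p) ^ (K-1-x) * (h (x+1) - h x)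

lemma keyA (K x : ℕ) (hK : 0 < K) :
    ((K.choose (x+1) : ℝ) * ((x:ℝ)+1)) = (K:ℝ) * ((K-1).choose x) := by
  have hs : (K-1) + 1 = K := by omega
  have h2 := Nat.add_one_mul_choose_eq (K-1) x
  rw [hs] at h2
  exact_mod_cast h2.symm

lemma keyB (K l : ℕ) (hK : 0 < K) :
    ((K.choose l : ℝ) * ((K - l : ℕ) : ℝ)) = (K:ℝ) * ((K-1).choose l) := by
  have hs : (K-1) + 1 = K := by omega
  have h1 := Nat.choose_succ_right_eq K l
  have h2 := Nat.add_one_mul_choose_eq (K-1) l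
  rw [hs] at h2
  have : K.choose l * (K - l) = K * (K-1).choose l := by rw [← h1]; exact h2.symm
  exact_mod_cast this

lemma hasDerivAt_G (K : ℕ) (hK : 0 < K) (h : ℕ → ℝ) (p : ℝ) :
    HasDerivAt (G K h) ((K : ℝ) * D K h p) p := by
  have key : ∀ l ∈ Finset.range (K+1),
      HasDerivAt (fun q : ℝ => (K.choose l : ℝ) * q ^ l * (1 - q) ^ (K - l) * h l)
        ((K.choose l : ℝ) * h l * ((l : ℝ) * p ^ (l-1) * (1-p)^(K-l)
          - ((K-l : ℕ) : ℝ) * p ^ l * (1-p)^(K-l-1))) p := by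
    intro l _
    have h1 : HasDerivAt (fun q : ℝ => q ^ l) ((l:ℝ) * p^(l-1)) p := hasDerivAt_pow l p
    have h3 : HasDerivAt (fun q : ℝ => 1 - q) (-1 : ℝ) p := by
      simpa using (hasDerivAt_id p).const_sub 1
    have h2 : HasDerivAt (fun q : ℝ => (1 - q) ^ (K-l))
        (-(((K-l:ℕ):ℝ) * (1-p)^(K-l-1))) p := by
      have h4 := (hasDerivAt_pow (K-l) (1-p)).comp p h3
      simpa [Function.comp_def] using h4
    have h5 := ((h1.const_mul ((K.choose l : ℝ))).mul h2).mul_const (h l)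
    refine h5.congr_deriv ?_
    ring
  have hsum := HasDerivAt.fun_sum key
  have hfun : (fun q : ℝ => ∑ l ∈ Finset.range (K+1),
      (K.choose l : ℝ) * q ^ l * (1 - q) ^ (K - l) * h l) = G K h := rfl
  rw [hfun] at hsum
  refine hsum.congr_deriv ?_
  have split : ∑ l ∈ Finset.range (K+1),
      (K.choose l : ℝ) * h l * ((l : ℝ) * p ^ (l-1) * (1-p)^(K-l)
        - ((K-l : ℕ) : ℝ) * p ^ l * (1-p)^(K-l-1))
    = (∑ l ∈ Finset.range (K+1), (K.choose l : ℝ) * (l:ℝ) * h l * p ^ (l-1) * (1-p)^(K-l))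
      - (∑ l ∈ Finset.range (K+1),
          (K.choose l : ℝ) * ((K-l:ℕ):ℝ) * h l * p ^ l * (1-p)^(K-l-1)) := by
    rw [← Finset.sum_sub_distrib]
    exact Finset.sum_congr rfl fun l _ => by ring
  rw [split]
  have hA : (∑ l ∈ Finset.range (K+1), (K.choose l : ℝ) * (l:ℝ) * h l * p ^ (l-1) * (1-p)^(K-l))
      = ∑ x ∈ Finset.range K, (K:ℝ) * ((K-1).choose x : ℝ) * h (x+1) * p ^ x * (1-p)^(K-1-x) := by
    rw [Finset.sum_range_succ']
    simp only [Nat.cast_zero, mul_zero, zero_mul, add_zero]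
    refine Finset.sum_congr rfl fun x hx => ?_
    have e1 : K - (x+1) = K - 1 - x := by omega
    have e2 : (x+1) - 1 = x := by omega
    rw [e1, e2]
    push_cast
    linear_combination (h (x+1) * p^x * (1-p)^(K-1-x)) * keyA K x hK
  have hB : (∑ l ∈ Finset.range (K+1),
        (K.choose l : ℝ) * ((K-l:ℕ):ℝ) * h l * p ^ l * (1-p)^(K-l-1))
      = ∑ l ∈ Finset.range K, (K:ℝ) * ((K-1).choose l : ℝ) * h l * p ^ l * (1-p)^(K-1-l) := by
    rw [Finset.sum_range_succ]
    simp only [Nat.sub_self, Nat.cast_zero, mul_zero, zero_mul, add_zero]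
    refine Finset.sum_congr rfl fun l hl => ?_
    have e1 : K - l - 1 = K - 1 - l := by omega
    rw [e1]
    linear_combination (h l * p^l * (1-p)^(K-1-l)) * keyB K l hK
  rw [hA, hB, D, Finset.mul_sum, ← Finset.sum_sub_distrib]
  exact Finset.sum_congr rfl fun x hx => by ring

lemma mono_of_deriv {f f' : ℝ → ℝ} (hf : ∀ x, HasDerivAt f (f' x) x) (a b : ℝ)
    (hd : ∀ x ∈ Set.Icc a b, 0 ≤ f' x) : MonotoneOn f (Set.Icc a b) := by
  apply monotoneOn_of_deriv_nonneg (convex_Icc a b)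
  · exact (Differentiable.continuous fun x => (hf x).differentiableAt).continuousOn
  · exact fun x _ => ((hf x).differentiableAt).differentiableWithinAt
  · intro x hx
    rw [(hf x).deriv]
    rw [interior_Icc] at hx
    exact hd x ⟨le_of_lt hx.1, le_of_lt hx.2⟩

lemma D_nonneg (K : ℕ) (h : ℕ → ℝ) (hhmono : ∀ l ≤ K - 1, h l ≤ h (l + 1))
    (p : ℝ) (hp : 0 ≤ p) (hp1 : p ≤ 1) : 0 ≤ D K h p := by
  apply Finset.sum_nonneg
  intro x hx
  have hx' : x ≤ K - 1 := by
    have := Finset.mem_range.mp hx; omega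
  have := hhmono x hx'
  have h1 : (0:ℝ) ≤ p ^ x := pow_nonneg hp x
  have h2 : (0:ℝ) ≤ (1-p) ^ (K-1-x) := pow_nonneg (by linarith) _
  have h3 : (0:ℝ) ≤ ((K-1).choose x : ℝ) := Nat.cast_nonneg _
  have h4 : (0:ℝ) ≤ h (x+1) - h x := by linarith
  exact mul_nonneg (mul_nonneg (mul_nonneg h3 h1) h2) h4

lemma G_zero (K : ℕ) (h : ℕ → ℝ) : G K h 0 = h 0 := by
  rw [G, Finset.sum_eq_single 0]
  · simp
  · intro l hl hne
    rw [zero_pow hne]; ring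
  · intro hl; simp at hl

lemma G_sum_one (K : ℕ) (p : ℝ) :
    ∑ l ∈ Finset.range (K+1), (K.choose l : ℝ) * p ^ l * (1 - p) ^ (K - l) = 1 := by
  have := add_pow p (1-p) K
  simp only [add_sub_cancel, one_pow] at this
  exact (Finset.sum_congr rfl fun l _ => by ring).trans this.symm

end St11

set_option maxHeartbeats 1000000 in
theorem statement11 (K : ℕ) (hK : Odd K) (hKpos : 0 < K)
    (ε m : ℝ) (hε : 0 ≤ ε) (hm : 0 ≤ m)
    (h γ : ℕ → ℝ)
    (hh01 : ∀ l ≤ K, 0 ≤ h l ∧ h l ≤ 1)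
    (hhsym : ∀ l ≤ K, h l + h (K - l) = 1)
    (hhmono : ∀ l ≤ K - 1, h l ≤ h (l + 1))
    (hγlo : ∀ l, l ≤ (K - 1) / 2 → γ l = 1 - 2 * h l)
    (hγhi : ∀ l, (K + 1) / 2 ≤ l → γ l = 2 * h l - 1)
    (hγpos1 : 0 < γ ((K - 1) / 2)) (hγpos2 : 0 < γ ((K + 1) / 2))
    (hγ01 : ∀ l ≤ K, 0 ≤ γ l ∧ γ l ≤ 1)
    (hcondA : ∀ p' : ℝ, 0 ≤ p' → p' ≤ 1 / (1 + Real.exp ε) →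
      Real.exp ε * ∑ x ∈ Finset.range K, ((K - 1).choose x : ℝ) *
          (Real.exp ε * p') ^ x * (1 - Real.exp ε * p') ^ (K - 1 - x) * (h (x + 1) - h x)
        ≤ Real.exp (m * ε) * ∑ x ∈ Finset.range K, ((K - 1).choose x : ℝ) *
          p' ^ x * (1 - p') ^ (K - 1 - x) * (h (x + 1) - h x))
    (hcondB : ∀ p : ℝ, 1 / (1 + Real.exp (-ε)) ≤ p → p ≤ 1 →
      (∑ x ∈ Finset.range K, ((K - 1).choose x : ℝ) *
          p ^ x * (1 - p) ^ (K - 1 - x) * (h (x + 1) - h x))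
        ≤ Real.exp ((m + 1) * ε) * ∑ x ∈ Finset.range K, ((K - 1).choose x : ℝ) *
          (1 - Real.exp ε * (1 - p)) ^ x * (Real.exp ε * (1 - p)) ^ (K - 1 - x) *
          (h (x + 1) - h x)) :
    ∀ p p' : ℝ, Feas0 ε p p' →
      (∑ l ∈ Finset.range ((K + 1) / 2),
          (Real.exp (m * ε) * binomPMF K p' l - binomPMF K p l) * γ l)
        + (∑ l ∈ Finset.Icc ((K + 1) / 2) K,
          (binomPMF K p l - Real.exp (m * ε) * binomPMF K p' l) * γ l)
        ≤ Real.exp (m * ε) - 1 := by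
  intro p p' hF
  obtain ⟨hp0, hp1, hp'0, hp'1, hc1, hc2, hc3, hc4⟩ := hF
  obtain ⟨k, hk⟩ := hK
  set a := Real.exp ε with hadef
  set E := Real.exp (m * ε) with hEdef
  have ha1 : 1 ≤ a := Real.one_le_exp hε
  have ha0 : 0 < a := by linarith
  have hE1 : 1 ≤ E := Real.one_le_exp (mul_nonneg hm hε)
  have h1a : (0:ℝ) < 1 + a := by linarith
  set Gf := St11.G K h with hGfdef
  set Df := St11.D K h with hDfdef
  have hder : ∀ x, HasDerivAt Gf ((K:ℝ) * Df x) x := fun x => St11.hasDerivAt_G K hKpos h x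
  have hK0 : (0:ℝ) ≤ (K:ℝ) := Nat.cast_nonneg K
  have hDnn : ∀ x : ℝ, 0 ≤ x → x ≤ 1 → 0 ≤ Df x := by
    intro x h1 h2; rw [hDfdef]; exact St11.D_nonneg K h hhmono x h1 h2
  have hG0 : Gf 0 = h 0 := by rw [hGfdef]; exact St11.G_zero K h
  have hGpsum : ∑ l ∈ Finset.range (K + 1), binomPMF K p l * h l = Gf p := by
    rw [hGfdef]; simp only [St11.G, binomPMF]
  have hGp'sum : ∑ l ∈ Finset.range (K + 1), binomPMF K p' l * h l = Gf p' := by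
    rw [hGfdef]; simp only [St11.G, binomPMF]
  have hGmono : MonotoneOn Gf (Set.Icc 0 1) :=
    St11.mono_of_deriv hder 0 1 fun x hx =>
      mul_nonneg hK0 (hDnn x hx.1 hx.2)
  set p₁ : ℝ := 1 / (1 + a) with hp₁def
  set p₀ : ℝ := a / (1 + a) with hp₀def
  have hp₁pos : 0 < p₁ := by positivity
  have hp₁le : p₁ ≤ 1 := by rw [hp₁def]; rw [div_le_one h1a]; linarith
  have hp₀0 : 0 ≤ p₀ := by positivity
  have hp₀le1 : p₀ ≤ 1 := by rw [hp₀def, div_le_one h1a]; linarith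
  have e₂ : a * p₁ = p₀ := by rw [hp₁def, hp₀def]; field_simp
  have e₁ : 1 - a * (1 - p₀) = p₁ := by rw [hp₁def, hp₀def]; field_simp; ring
  have hthr : 1 / (1 + Real.exp (-ε)) = p₀ := by
    rw [hp₀def, Real.exp_neg, ← hadef]
    rw [div_eq_div_iff (by positivity) (ne_of_gt h1a)]
    field_simp
    ring
  -- condition A in terms of Df
  have hcA : ∀ x : ℝ, 0 ≤ x → x ≤ p₁ → a * Df (a * x) ≤ E * Df x := by
    intro x hx1 hx2
    have := hcondA x hx1 hx2
    simpa only [hDfdef, St11.D] using this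
  have hcB : ∀ x : ℝ, p₀ ≤ x → x ≤ 1 → Df x ≤ E * a * Df (1 - a * (1 - x)) := by
    intro x hx1 hx2
    have := hcondB x (by rw [hthr]; exact hx1) hx2
    have hEa : Real.exp ((m + 1) * ε) = E * a := by
      rw [hEdef, hadef, ← Real.exp_add]; ring_nf
    rw [hEa] at this
    simpa only [hDfdef, St11.D,
      show (1:ℝ) - (1 - a * (1 - x)) = a * (1 - x) from by ring] using this
  clear_value a E Gf Df p₁ p₀
  -- ψ monotone
  have hψder : ∀ t : ℝ, HasDerivAt (fun t => E * Gf t - Gf (a * t))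
      (E * ((K:ℝ) * Df t) - ((K:ℝ) * Df (a * t)) * a) t := by
    intro t
    have hin : HasDerivAt (fun t : ℝ => a * t) a t := by
      simpa using (hasDerivAt_id t).const_mul a
    exact ((hder t).const_mul E).sub ((hder (a * t)).comp t hin)
  have hψmono : MonotoneOn (fun t => E * Gf t - Gf (a * t)) (Set.Icc 0 p₁) := by
    refine St11.mono_of_deriv hψder 0 p₁ fun x hx => ?_
    have := hcA x hx.1 hx.2
    nlinarith [mul_nonneg hK0 (sub_nonneg.mpr this)]
  have hψ0 : (0:ℝ) ≤ E * Gf 0 - Gf (a * 0) := by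
    rw [mul_zero, hG0]
    have h0 := (hh01 0 (Nat.zero_le K)).1
    nlinarith
  have hψp₁ : (0:ℝ) ≤ E * Gf p₁ - Gf (a * p₁) := by
    have := hψmono (Set.mem_Icc.mpr ⟨le_refl 0, hp₁pos.le⟩)
      (Set.mem_Icc.mpr ⟨hp₁pos.le, le_refl p₁⟩) hp₁pos.le
    simp only at this
    linarith
  -- φ monotone
  have hφder : ∀ t : ℝ, HasDerivAt (fun t => E * Gf (1 - a * (1 - t)) - Gf t)
      (E * (((K:ℝ) * Df (1 - a * (1 - t))) * a) - (K:ℝ) * Df t) t := by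
    intro t
    have hin : HasDerivAt (fun t : ℝ => 1 - a * (1 - t)) a t := by
      have := (((hasDerivAt_id t).const_sub 1).const_mul a).const_sub 1
      simpa using this
    exact (((hder (1 - a * (1 - t))).comp t hin).const_mul E).sub (hder t)
  have hφmono : MonotoneOn (fun t => E * Gf (1 - a * (1 - t)) - Gf t) (Set.Icc p₀ 1) := by
    refine St11.mono_of_deriv hφder p₀ 1 fun x hx => ?_
    have := hcB x hx.1 hx.2
    nlinarith [mul_nonneg hK0 (sub_nonneg.mpr this)]
  have hφp₀ : (0:ℝ) ≤ E * Gf (1 - a * (1 - p₀)) - Gf p₀ := by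
    rw [e₁, ← e₂]
    exact hψp₁
  -- core inequality
  have hcore : Gf p ≤ E * Gf p' := by
    by_cases hcase : p ≤ p₀
    · by_cases hcase2 : p' ≤ p₁
      · have hψ := hψmono (Set.mem_Icc.mpr ⟨le_refl 0, hp₁pos.le⟩)
          (Set.mem_Icc.mpr ⟨hp'0, hcase2⟩) hp'0
        simp only at hψ
        have hap' : a * p' ≤ 1 := by
          have : a * p' ≤ a * p₁ := by nlinarith
          rw [e₂] at this; linarith
        have hGm : Gf p ≤ Gf (a * p') :=
          hGmono (Set.mem_Icc.mpr ⟨hp0, hp1⟩)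
            (Set.mem_Icc.mpr ⟨mul_nonneg ha0.le hp'0, hap'⟩) hc1
        linarith
      · push_neg at hcase2
        have h1 : Gf p ≤ Gf p₀ :=
          hGmono (Set.mem_Icc.mpr ⟨hp0, hp1⟩) (Set.mem_Icc.mpr ⟨hp₀0, hp₀le1⟩) hcase
        have h4 : Gf p₁ ≤ Gf p' :=
          hGmono (Set.mem_Icc.mpr ⟨hp₁pos.le, hp₁le⟩) (Set.mem_Icc.mpr ⟨hp'0, hp'1⟩) hcase2.le
        have h5 : E * Gf p₁ ≤ E * Gf p' := by nlinarith
        rw [e₂] at hψp₁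
        linarith
    · push_neg at hcase
      have hq0 : 0 ≤ 1 - a * (1 - p) := by
        have h6 : a * (1 - p) ≤ a * (1 - p₀) := by nlinarith
        have h7 : a * (1 - p₀) ≤ 1 := by
          have : a * (1 - p₀) = a * p₁ := by rw [hp₀def, hp₁def]; field_simp; ring
          rw [this, e₂]; linarith
        linarith
      have hq1 : 1 - a * (1 - p) ≤ 1 := by nlinarith
      have hqp' : 1 - a * (1 - p) ≤ p' := by linarith
      have hφ := hφmono (Set.mem_Icc.mpr ⟨le_refl p₀, hp₀le1⟩)
        (Set.mem_Icc.mpr ⟨hcase.le, hp1⟩) hcase.le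
      simp only at hφ
      have h4 : Gf (1 - a * (1 - p)) ≤ Gf p' :=
        hGmono (Set.mem_Icc.mpr ⟨hq0, hq1⟩) (Set.mem_Icc.mpr ⟨hp'0, hp'1⟩) hqp'
      have h5 : E * Gf (1 - a * (1 - p)) ≤ E * Gf p' := by nlinarith
      linarith
  -- rearrange the goal
  have hM1 : (K + 1) / 2 = k + 1 := by omega
  have hM0 : (K - 1) / 2 = k := by omega
  have hs1 : (∑ l ∈ Finset.range ((K + 1) / 2),
        (E * binomPMF K p' l - binomPMF K p l) * γ l)
      = ∑ l ∈ Finset.range (k + 1),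
        (E * binomPMF K p' l - binomPMF K p l) * (1 - 2 * h l) := by
    rw [hM1]
    refine Finset.sum_congr rfl fun l hl => ?_
    have hl' := Finset.mem_range.mp hl
    rw [hγlo l (by omega)]
  have hs2 : (∑ l ∈ Finset.Icc ((K + 1) / 2) K,
        (binomPMF K p l - E * binomPMF K p' l) * γ l)
      = ∑ l ∈ Finset.Icc (k + 1) K,
        (E * binomPMF K p' l - binomPMF K p l) * (1 - 2 * h l) := by
    rw [hM1]
    refine Finset.sum_congr rfl fun l hl => ?_
    have hl' := Finset.mem_Icc.mp hl
    rw [hγhi l (by omega)]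
    ring
  have hcomb : (∑ l ∈ Finset.range (k + 1),
        (E * binomPMF K p' l - binomPMF K p l) * (1 - 2 * h l))
      + (∑ l ∈ Finset.Icc (k + 1) K,
        (E * binomPMF K p' l - binomPMF K p l) * (1 - 2 * h l))
      = ∑ l ∈ Finset.range (K + 1),
        (E * binomPMF K p' l - binomPMF K p l) * (1 - 2 * h l) := by
    rw [Finset.range_eq_Ico, Finset.range_eq_Ico, ← Finset.Ico_add_one_right_eq_Icc]
    exact Finset.sum_Ico_consecutive _ (Nat.zero_le _) (by omega)
  have hbp : ∑ l ∈ Finset.range (K + 1), binomPMF K p l = 1 := by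
    simpa [binomPMF] using St11.G_sum_one K p
  have hbp' : ∑ l ∈ Finset.range (K + 1), binomPMF K p' l = 1 := by
    simpa [binomPMF] using St11.G_sum_one K p'
  have hexp : (∑ l ∈ Finset.range (K + 1),
        (E * binomPMF K p' l - binomPMF K p l) * (1 - 2 * h l))
      = E * (∑ l ∈ Finset.range (K + 1), binomPMF K p' l)
        - (∑ l ∈ Finset.range (K + 1), binomPMF K p l)
        - 2 * (E * (∑ l ∈ Finset.range (K + 1), binomPMF K p' l * h l)
            - ∑ l ∈ Finset.range (K + 1), binomPMF K p l * h l) := by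
    simp only [Finset.mul_sum, ← Finset.sum_sub_distrib]
    exact Finset.sum_congr rfl fun l _ => by ring
  rw [hs1, hs2, hcomb, hexp, hbp, hbp', hGpsum, hGp'sum]
  linarith
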